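/- Let {W, W̃, Z} be an LTONP data set with Pick operator Λ = WW* − W̃W̃* strictly positive, and set B̃ = W̃ E_𝒰 and R∘ = (I_𝒰 + B̃*Λ⁻¹B̃)^{-1/2}. Then for every λ in the open unit disc: the operators I − λZ* and I − λ Z*(Λ + B̃B̃*)⁻¹Λ are invertible, the operator Υ₂₂(λ) = R∘ + B̃*(I − λZ*)⁻¹ Λ⁻¹ B̃ R∘ on 𝒰 is invertible, and Υ₂₂(λ)⁻¹ = R∘ − λ R∘ B̃* (I − λ Z*(Λ + B̃B̃*)⁻¹Λ)⁻¹ Z* Λ⁻¹ B̃ R∘². In particular the spectrum of Z*(Λ + B̃B̃*)⁻¹Λ is contained in the closed unit disc. -/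

import Mathlib

/- Statement 10 (Invertibility of Υ₂₂ and its inverse formula): Let {W, W̃, Z} be an
LTONP data set with strictly positive Pick operator Λ, B̃ = W̃ E_𝒰 and
R∘ = (I + B̃*Λ⁻¹B̃)^{-1/2}.  Then for every λ in the open unit disc the operators
I − λZ* and I − λZ*(Λ + B̃B̃*)⁻¹Λ are invertible, the operator
Υ₂₂(λ) = R∘ + B̃*(I − λZ*)⁻¹Λ⁻¹B̃R∘ is invertible, and
Υ₂₂(λ)⁻¹ = R∘ − λR∘B̃*(I − λZ*(Λ + B̃B̃*)⁻¹Λ)⁻¹Z*Λ⁻¹B̃R∘².  In particular the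
spectrum of Z*(Λ + B̃B̃*)⁻¹Λ is contained in the closed unit disc. -/

open ContinuousLinearMap Filter Topology
open scoped ENNReal

noncomputable section

local notation "ℓ²(" X ")" => lp (fun _ : ℕ => X) 2

/-- A bounded operator on a Hilbert space is strictly positive if it is positive
(self-adjoint with non-negative quadratic form) and invertible. -/
def IsStrictlyPositiveOp {H : Type*} [NormedAddCommGroup H] [InnerProductSpace ℂ H]
    [CompleteSpace H] (T : H →L[ℂ] H) : Prop :=
  T.IsPositive ∧ IsUnit T

variable {𝒵 𝒴 𝒰 : Type*}
  [NormedAddCommGroup 𝒵] [InnerProductSpace ℂ 𝒵] [CompleteSpace 𝒵]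
  [NormedAddCommGroup 𝒴] [InnerProductSpace ℂ 𝒴] [CompleteSpace 𝒴]
  [NormedAddCommGroup 𝒰] [InnerProductSpace ℂ 𝒰] [CompleteSpace 𝒰]

/-! ### Auxiliary lemmas -/

set_option linter.unusedSectionVars false
set_option maxHeartbeats 2000000

section Aux

open RCLike
open scoped NNReal

variable {H : Type*} [NormedAddCommGroup H] [InnerProductSpace ℂ H] [CompleteSpace H]

local notation "⟪" x ", " y "⟫" => @inner ℂ _ _ x y

lemma aux_two_pos : (0:ℝ) < (2 : ℝ≥0∞).toReal := by norm_num

lemma aux_shift_norm (S : ℓ²(H) →L[ℂ] ℓ²(H))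
    (h0 : ∀ x : ℓ²(H), S x 0 = 0) (h1 : ∀ (x : ℓ²(H)) (n : ℕ), S x (n + 1) = x n)
    (x : ℓ²(H)) : ‖S x‖ = ‖x‖ := by
  have hs := lp.hasSum_norm aux_two_pos (S x)
  have hx := lp.hasSum_norm aux_two_pos x
  have hshift : HasSum (fun n => ‖S x (n + 1)‖ ^ (2 : ℝ≥0∞).toReal)
      (‖S x‖ ^ (2 : ℝ≥0∞).toReal - ∑ i ∈ Finset.range 1, ‖S x i‖ ^ (2 : ℝ≥0∞).toReal) :=
    ((hasSum_nat_add_iff' 1).2 hs)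
  have h0' : ∑ i ∈ Finset.range 1, ‖S x i‖ ^ (2 : ℝ≥0∞).toReal = 0 := by
    simp [h0 x, Real.zero_rpow (by norm_num : (2 : ℝ≥0∞).toReal ≠ 0)]
  rw [h0', sub_zero] at hshift
  simp only [h1 x] at hshift
  have heq : ‖S x‖ ^ (2 : ℝ≥0∞).toReal = ‖x‖ ^ (2 : ℝ≥0∞).toReal := hshift.unique hx
  have h2 : (2 : ℝ≥0∞).toReal = ((2:ℕ) : ℝ) := by norm_num
  rw [h2, Real.rpow_natCast, Real.rpow_natCast] at heq
  exact (pow_left_inj₀ (norm_nonneg _) (norm_nonneg _) (by norm_num)).1 heq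

lemma aux_shift_single (S : ℓ²(H) →L[ℂ] ℓ²(H))
    (h0 : ∀ x : ℓ²(H), S x 0 = 0) (h1 : ∀ (x : ℓ²(H)) (n : ℕ), S x (n + 1) = x n)
    (n : ℕ) (u : H) : S (lp.single 2 n u) = lp.single 2 (n+1) u := by
  apply lp.ext
  funext m
  match m with
  | 0 => simp [h0, lp.single_apply_ne _ _ _ (by omega : (0:ℕ) ≠ n+1)]
  | (m+1) =>
    rw [h1]
    rcases eq_or_ne m n with rfl | hmn
    · simp [lp.single_apply_self]
    · rw [lp.single_apply_ne _ _ _ hmn, lp.single_apply_ne _ _ _ (by omega : m+1 ≠ n+1)]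

lemma aux_adjoint_shift_apply (S : ℓ²(H) →L[ℂ] ℓ²(H))
    (h0 : ∀ x : ℓ²(H), S x 0 = 0) (h1 : ∀ (x : ℓ²(H)) (n : ℕ), S x (n + 1) = x n)
    (v : ℓ²(H)) (n : ℕ) : (adjoint S) v n = v (n+1) := by
  classical
  apply ext_inner_right ℂ
  intro u
  calc ⟪(adjoint S) v n, u⟫ = ⟪(adjoint S) v, lp.single 2 n u⟫ := by
        rw [lp.inner_single_right]
    _ = ⟪v, S (lp.single 2 n u)⟫ := adjoint_inner_left S _ _
    _ = ⟪v, lp.single 2 (n+1) u⟫ := by rw [aux_shift_single S h0 h1]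
    _ = ⟪v (n+1), u⟫ := by rw [lp.inner_single_right]

lemma aux_adjoint_embed_apply (E : H →L[ℂ] ℓ²(H))
    (h0 : ∀ u : H, E u 0 = u) (h1 : ∀ (u : H) (n : ℕ), E u (n + 1) = 0)
    (w : ℓ²(H)) : (adjoint E) w = w 0 := by
  classical
  apply ext_inner_right ℂ
  intro u
  rw [adjoint_inner_left]
  rw [lp.inner_eq_tsum]
  rw [tsum_eq_single 0]
  · rw [h0]
  · intro n hn
    match n with
    | 0 => exact absurd rfl hn
    | (m+1) => rw [h1]; exact inner_zero_right _

lemma aux_proj_identity (S : ℓ²(H) →L[ℂ] ℓ²(H)) (E : H →L[ℂ] ℓ²(H))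
    (hS0 : ∀ x : ℓ²(H), S x 0 = 0) (hS1 : ∀ (x : ℓ²(H)) (n : ℕ), S x (n + 1) = x n)
    (hE0 : ∀ u : H, E u 0 = u) (hE1 : ∀ (u : H) (n : ℕ), E u (n + 1) = 0) :
    (1 : ℓ²(H) →L[ℂ] ℓ²(H)) - S.comp (adjoint S) = E.comp (adjoint E) := by
  ext v m
  have hm : ∀ n, ((1 : ℓ²(H) →L[ℂ] ℓ²(H)) - S.comp (adjoint S)) v n
      = v n - (S ((adjoint S) v)) n := by
    intro n; rfl
  match m with
  | 0 =>
    rw [hm, hS0, comp_apply, aux_adjoint_embed_apply E hE0 hE1, hE0, sub_zero]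
  | (n+1) =>
    rw [hm, hS1, aux_adjoint_shift_apply S hS0 hS1, comp_apply,
      aux_adjoint_embed_apply E hE0 hE1, hE1, sub_self]

lemma aux_specRad_le_one {A : Type*} [NormedRing A] [NormedAlgebra ℂ A] [CompleteSpace A]
    (a : A) (C : ℝ) (h : ∀ n : ℕ, ‖a ^ n‖ ≤ C) : spectralRadius ℂ a ≤ 1 := by
  set c : ℝ := max C 1 with hc
  have hc1 : (1:ℝ) ≤ c := le_max_right _ _
  have hc0 : (0:ℝ) < c := lt_of_lt_of_le one_pos hc1
  have hbd : ∀ n : ℕ, (‖a ^ n‖₊ : ℝ≥0∞) ^ (1 / (n:ℝ)) ≤ (ENNReal.ofReal c) ^ (1 / (n:ℝ)) := by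
    intro n
    apply ENNReal.rpow_le_rpow _ (by positivity)
    rw [show (‖a ^ n‖₊ : ℝ≥0∞) = ENNReal.ofReal ‖a ^ n‖ from (ofReal_norm _).symm]
    exact ENNReal.ofReal_le_ofReal ((h n).trans (le_max_left _ _))
  have htend : Tendsto (fun n : ℕ => (ENNReal.ofReal c) ^ (1 / (n:ℝ))) atTop (nhds 1) := by
    have hre : Tendsto (fun n : ℕ => c ^ (1 / (n:ℝ))) atTop (nhds 1) := by
      have h1 : Tendsto (fun n : ℕ => Real.log c * (1 / (n:ℝ))) atTop (nhds 0) := by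
        simpa using (tendsto_one_div_atTop_nhds_zero_nat.const_mul (Real.log c))
      have h2 : Tendsto (fun n : ℕ => Real.exp (Real.log c * (1 / (n:ℝ)))) atTop (nhds 1) := by
        simpa [Function.comp_def] using (Real.continuous_exp.continuousAt.tendsto.comp h1)
      refine h2.congr (fun n => ?_)
      rw [← Real.rpow_def_of_pos hc0]
    have := (ENNReal.continuous_ofReal.continuousAt.tendsto (x := (1:ℝ))).comp hre
    simp only [ENNReal.ofReal_one] at this
    refine this.congr (fun n => ?_)
    simp only [Function.comp_apply]
    rw [ENNReal.ofReal_rpow_of_pos hc0]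
  have hliminf : atTop.liminf (fun n : ℕ => (‖a ^ n‖₊ : ℝ≥0∞) ^ (1 / (n:ℝ))) ≤ 1 := by
    calc atTop.liminf (fun n : ℕ => (‖a ^ n‖₊ : ℝ≥0∞) ^ (1 / (n:ℝ)))
        ≤ atTop.liminf (fun n : ℕ => (ENNReal.ofReal c) ^ (1 / (n:ℝ))) :=
          Filter.liminf_le_liminf (Filter.Eventually.of_forall hbd)
      _ = 1 := htend.liminf_eq
  exact (spectrum.spectralRadius_le_liminf_pow_nnnorm_pow_one_div ℂ a).trans hliminf

lemma aux_isUnit_one_sub {A : Type*} [NormedRing A] [NormedAlgebra ℂ A] [CompleteSpace A]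
    (a : A) (C : ℝ) (h : ∀ n : ℕ, ‖a ^ n‖ ≤ C) {z : ℂ} (hz : ‖z‖ < 1) :
    IsUnit (1 - z • a) := by
  apply spectrum.isUnit_one_sub_smul_of_lt_inv_radius
  calc (‖z‖₊ : ℝ≥0∞) < 1 := by
        exact_mod_cast ENNReal.coe_lt_coe.mpr (show ‖z‖₊ < 1 from hz)
    _ ≤ (spectralRadius ℂ a)⁻¹ := ENNReal.one_le_inv.mpr (aux_specRad_le_one a C h)

lemma aux_quad_mono {p q : H →L[ℂ] H} (h : p ≤ q) (x : H) :
    re ⟪p x, x⟫ ≤ re ⟪q x, x⟫ := by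
  have := (ContinuousLinearMap.le_def p q).mp h |>.2 x
  rw [reApplyInnerSelf_apply] at this
  rw [sub_apply, inner_sub_left, map_sub] at this
  linarith

lemma aux_star_ringinverse {M : H →L[ℂ] H} (hM : IsSelfAdjoint M) (hu : IsUnit M) :
    star (Ring.inverse M) = Ring.inverse M := by
  have h1 : star (Ring.inverse M) * M = 1 := by
    calc star (Ring.inverse M) * M = star (Ring.inverse M) * star M := by rw [hM.star_eq]
    _ = star (M * Ring.inverse M) := by rw [star_mul]
    _ = 1 := by rw [Ring.mul_inverse_cancel M hu, star_one]
  calc star (Ring.inverse M) = star (Ring.inverse M) * (M * Ring.inverse M) := by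
        rw [Ring.mul_inverse_cancel M hu, mul_one]
    _ = (star (Ring.inverse M) * M) * Ring.inverse M := by rw [mul_assoc]
    _ = Ring.inverse M := by rw [h1, one_mul]

lemma aux_ringinverse_nonneg {M : H →L[ℂ] H} (hM : 0 ≤ M) (hu : IsUnit M) :
    0 ≤ Ring.inverse M := by
  have hsa : IsSelfAdjoint M := ((nonneg_iff_isPositive M).mp hM).isSelfAdjoint
  have h : Ring.inverse M = star (Ring.inverse M) * M * Ring.inverse M := by
    rw [aux_star_ringinverse hsa hu]
    rw [mul_assoc, Ring.mul_inverse_cancel M hu, mul_one]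
  rw [h]
  exact star_left_conjugate_nonneg hM _

lemma aux_conj_inner (b Λ : H →L[ℂ] H) (x : H) :
    ⟪(star b * Λ * b) x, x⟫ = ⟪Λ (b x), b x⟫ := by
  rw [mul_apply_eq_comp, mul_apply_eq_comp, star_eq_adjoint, adjoint_inner_left]

lemma aux_quad_of_conj_le {a Λ : H →L[ℂ] H} (h : star a * Λ * a ≤ Λ) (y : H) :
    re ⟪Λ (a y), a y⟫ ≤ re ⟪Λ y, y⟫ := by
  have := aux_quad_mono h y
  rwa [aux_conj_inner] at this

lemma aux_quad_pow {a Λ : H →L[ℂ] H}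
    (hstep : ∀ y, re ⟪Λ (a y), a y⟫ ≤ re ⟪Λ y, y⟫) :
    ∀ (n : ℕ) (x : H), re ⟪Λ ((a ^ n) x), (a ^ n) x⟫ ≤ re ⟪Λ x, x⟫ := by
  intro n
  induction n with
  | zero => intro x; simp [pow_zero, one_apply]
  | succ n ih =>
    intro x
    have h1 : (a ^ (n+1)) x = (a ^ n) (a x) := by rw [pow_succ, mul_apply_eq_comp]
    rw [h1]
    exact (ih (a x)).trans (hstep x)

lemma aux_pow_norm_le {a Λ : H →L[ℂ] H} {ε c : ℝ} (hε : 0 < ε) (hc : 0 ≤ c)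
    (hcoer : ∀ x : H, ε * ‖x‖ ^ 2 ≤ re ⟪Λ x, x⟫)
    (hq : ∀ (n : ℕ) (x : H), re ⟪Λ ((a ^ n) x), (a ^ n) x⟫ ≤ c * ‖x‖ ^ 2) (n : ℕ) :
    ‖a ^ n‖ ≤ Real.sqrt (c / ε) := by
  apply opNorm_le_bound _ (Real.sqrt_nonneg _)
  intro x
  have h1 : ε * ‖(a ^ n) x‖ ^ 2 ≤ c * ‖x‖ ^ 2 := (hcoer _).trans (hq n x)
  have h2 : ‖(a ^ n) x‖ ^ 2 ≤ (c / ε) * ‖x‖ ^ 2 := by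
    rw [div_mul_eq_mul_div, le_div_iff₀ hε]
    linarith [h1]
  calc ‖(a ^ n) x‖ = Real.sqrt (‖(a ^ n) x‖ ^ 2) := (Real.sqrt_sq (norm_nonneg _)).symm
    _ ≤ Real.sqrt ((c / ε) * ‖x‖ ^ 2) := Real.sqrt_le_sqrt h2
    _ = Real.sqrt (c / ε) * ‖x‖ := by
        rw [Real.sqrt_mul (div_nonneg hc hε.le), Real.sqrt_sq (norm_nonneg _)]

lemma aux_coercive {T : H →L[ℂ] H} (hp : 0 ≤ T) (hu : IsUnit T) :
    ∃ ε : ℝ, 0 < ε ∧ ∀ x : H, ε * ‖x‖ ^ 2 ≤ re ⟪T x, x⟫ := by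
  rcases subsingleton_or_nontrivial H with hs | hns
  · exact ⟨1, one_pos, fun x => by
      have : x = 0 := Subsingleton.elim x 0
      simp [this]⟩
  · have hnt : Nontrivial (H →L[ℂ] H) := by
      obtain ⟨x, hx⟩ := exists_ne (0 : H)
      refine nontrivial_of_ne 1 0 (fun h => hx ?_)
      have := congrArg (fun (f : H →L[ℂ] H) => f x) h
      simpa using this
    set Q := Ring.inverse T with hQdef
    have hTQ : T * Q = 1 := Ring.mul_inverse_cancel T hu
    have hQT : Q * T = 1 := Ring.inverse_mul_cancel T hu
    have hQu : IsUnit Q := isUnit_iff_exists.mpr ⟨T, hQT, hTQ⟩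
    have hQ0 : 0 ≤ Q := aux_ringinverse_nonneg hp hu
    have hQne : Q ≠ 0 := by
      intro h
      rw [h, mul_zero] at hTQ
      exact one_ne_zero hTQ.symm
    have hcpos : (0:ℝ) < ‖Q‖ := norm_pos_iff.mpr hQne
    set c : ℝ := ‖Q‖ with hcdef
    have hQle : Q ≤ algebraMap ℝ (H →L[ℂ] H) c :=
      (CStarAlgebra.norm_le_iff_le_algebraMap Q hcpos.le hQ0).mp le_rfl
    have hbu : IsUnit (algebraMap ℝ (H →L[ℂ] H) c) :=
      (isUnit_iff_ne_zero.mpr (ne_of_gt hcpos)).map (algebraMap ℝ (H →L[ℂ] H))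
    have hineq : (↑hbu.unit⁻¹ : H →L[ℂ] H) ≤ ↑hQu.unit⁻¹ := by
      apply CStarAlgebra.inv_le_inv (a := hQu.unit) (by rw [hQu.unit_spec]; exact hQ0)
      rw [hQu.unit_spec, hbu.unit_spec]
      exact hQle
    have h1 : (↑hQu.unit⁻¹ : H →L[ℂ] H) = T := by
      symm
      apply Units.eq_inv_of_mul_eq_one_left
      rw [hQu.unit_spec]; exact hQT
    have h2 : (↑hbu.unit⁻¹ : H →L[ℂ] H) = algebraMap ℝ (H →L[ℂ] H) c⁻¹ := by
      symm
      apply Units.eq_inv_of_mul_eq_one_left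
      rw [hbu.unit_spec, ← map_mul, mul_inv_cancel₀ (ne_of_gt hcpos), map_one]
    rw [h1, h2] at hineq
    refine ⟨c⁻¹, inv_pos.mpr hcpos, fun x => ?_⟩
    have := aux_quad_mono hineq x
    calc c⁻¹ * ‖x‖ ^ 2 = re ⟪(algebraMap ℝ (H →L[ℂ] H) c⁻¹) x, x⟫ := by
          rw [Algebra.algebraMap_eq_smul_one]
          rw [ContinuousLinearMap.smul_apply, one_apply_eq_self]
          rw [RCLike.real_smul_eq_coe_smul (K := ℂ), inner_smul_real_left,
            RCLike.smul_re, inner_self_eq_norm_sq]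
      _ ≤ re ⟪T x, x⟫ := this

lemma aux_norm_adjoint (q : H →L[ℂ] H) : ‖adjoint q‖ = ‖q‖ :=
  LinearIsometryEquiv.norm_map adjoint q

lemma aux_one_sub_mul_star_pos (q : H →L[ℂ] H) (hq : ‖q‖ ≤ 1) :
    ((1 : H →L[ℂ] H) - q.comp (adjoint q)).IsPositive := by
  constructor
  · have : star ((1 : H →L[ℂ] H) - q * star q) = 1 - q * star q := by
      rw [star_sub, star_one, star_mul, star_star]
    exact ContinuousLinearMap.isSelfAdjoint_iff_isSymmetric.mp this
  · intro x
    rw [reApplyInnerSelf_apply, sub_apply, one_apply_eq_self, inner_sub_left, map_sub]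
    have h1 : ⟪(q.comp (adjoint q)) x, x⟫ = ⟪(adjoint q) x, (adjoint q) x⟫ := by
      rw [comp_apply, ← adjoint_inner_right]
    rw [h1, inner_self_eq_norm_sq, inner_self_eq_norm_sq]
    have h2 : ‖(adjoint q) x‖ ≤ ‖x‖ := by
      calc ‖(adjoint q) x‖ ≤ ‖adjoint q‖ * ‖x‖ := le_opNorm _ _
        _ = ‖q‖ * ‖x‖ := by rw [aux_norm_adjoint]
        _ ≤ 1 * ‖x‖ := by gcongr
        _ = ‖x‖ := one_mul _
    have := pow_le_pow_left₀ (norm_nonneg _) h2 2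
    linarith

lemma aux_pow_isometry {q : H →L[ℂ] H} (hq : ∀ x, ‖q x‖ = ‖x‖) (n : ℕ) (x : H) :
    ‖(q ^ n) x‖ = ‖x‖ := by
  induction n generalizing x with
  | zero => simp [pow_zero, one_apply]
  | succ n ih =>
    rw [pow_succ, mul_apply_eq_comp, ih, hq]

lemma aux_pow_norm_le_one {q : H →L[ℂ] H} (hq : ∀ x, ‖q x‖ = ‖x‖) (n : ℕ) :
    ‖q ^ n‖ ≤ 1 :=
  opNorm_le_bound _ zero_le_one (fun x => by rw [aux_pow_isometry hq, one_mul])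

lemma aux_ring_inverse_eq {A : Type*} [Ring A] {a b : A} (h1 : a * b = 1) (h2 : b * a = 1) :
    Ring.inverse a = b := by
  have hu : IsUnit a := isUnit_iff_exists.mpr ⟨b, h1, h2⟩
  rw [← hu.unit_spec, Ring.inverse_unit]
  exact (Units.eq_inv_of_mul_eq_one_left (by rw [hu.unit_spec]; exact h1)).symm

lemma aux_geom {B : Type*} [Ring B] [Module ℂ B] [SMulCommClass ℂ B B]
    [IsScalarTower ℂ B B] {p q : B} {z : ℂ} (h1 : p - q = z • (p * q)) :
    (1 + z • p) * (1 - z • q) = 1 := by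
  have hexp : (1 + z • p) * (1 - z • q) = 1 + (z • p - z • q - (z * z) • (p * q)) := by
    simp only [add_mul, sub_mul, mul_add, mul_sub, one_mul, mul_one, smul_mul_smul_comm]
    abel
  rw [hexp]
  have hzero : z • p - z • q - (z * z) • (p * q) = 0 := by
    rw [← smul_sub, h1, smul_smul]
    exact sub_self _
  rw [hzero, add_zero]

lemma aux_geom' {B : Type*} [Ring B] [Module ℂ B] [SMulCommClass ℂ B B]
    [IsScalarTower ℂ B B] {p q : B} {z : ℂ} (h2 : p - q = z • (q * p)) :
    (1 - z • q) * (1 + z • p) = 1 := by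
  have hexp : (1 - z • q) * (1 + z • p) = 1 + (z • p - z • q - (z * z) • (q * p)) := by
    simp only [add_mul, sub_mul, mul_add, mul_sub, one_mul, mul_one, smul_mul_smul_comm]
    abel
  rw [hexp]
  have hzero : z • p - z • q - (z * z) • (q * p) = 0 := by
    rw [← smul_sub, h2, smul_smul]
    exact sub_self _
  rw [hzero, add_zero]

lemma aux_cancel_left {E F : Type*} [NormedAddCommGroup E] [InnerProductSpace ℂ E]
    [NormedAddCommGroup F] [InnerProductSpace ℂ F]
    {f g : E →L[ℂ] E} (h : f.comp g = 1) (k : F →L[ℂ] E) :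
    f.comp (g.comp k) = k := by
  rw [← comp_assoc, h, one_def, id_comp]

end Aux

theorem upsilon22_invertible_and_inverse_formula
    -- the unilateral forward shifts and the embedding onto the zeroth coordinate
    (S𝒴 : ℓ²(𝒴) →L[ℂ] ℓ²(𝒴)) (S𝒰 : ℓ²(𝒰) →L[ℂ] ℓ²(𝒰))
    (hS𝒴0 : ∀ x : ℓ²(𝒴), S𝒴 x 0 = 0)
    (hS𝒴1 : ∀ (x : ℓ²(𝒴)) (n : ℕ), S𝒴 x (n + 1) = x n)
    (hS𝒰0 : ∀ x : ℓ²(𝒰), S𝒰 x 0 = 0)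
    (hS𝒰1 : ∀ (x : ℓ²(𝒰)) (n : ℕ), S𝒰 x (n + 1) = x n)
    (E𝒰 : 𝒰 →L[ℂ] ℓ²(𝒰))
    (hE𝒰0 : ∀ u : 𝒰, E𝒰 u 0 = u) (hE𝒰1 : ∀ (u : 𝒰) (n : ℕ), E𝒰 u (n + 1) = 0)
    -- the LTONP data set {W, W̃, Z}
    (Z : 𝒵 →L[ℂ] 𝒵) (W : ℓ²(𝒴) →L[ℂ] 𝒵) (Wt : ℓ²(𝒰) →L[ℂ] 𝒵)
    (hW : Z.comp W = W.comp S𝒴) (hWt : Z.comp Wt = Wt.comp S𝒰)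
    -- Λ, B̃
    (Λ : 𝒵 →L[ℂ] 𝒵) (Bt : 𝒰 →L[ℂ] 𝒵)
    (hΛ : Λ = W.comp (adjoint W) - Wt.comp (adjoint Wt))
    (hBt : Bt = Wt.comp E𝒰)
    -- the Pick operator is strictly positive
    (hpos : IsStrictlyPositiveOp Λ)
    -- R∘ = (I + B̃*Λ⁻¹B̃)^{-1/2}
    (R : 𝒰 →L[ℂ] 𝒰)
    (hR : R.IsPositive ∧
      R.comp R = Ring.inverse (1 + (adjoint Bt).comp ((Ring.inverse Λ).comp Bt)))
    (z : ℂ) (hz : ‖z‖ < 1) :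
    IsUnit (1 - z • adjoint Z) ∧
    IsUnit (1 - z • ((adjoint Z).comp
      ((Ring.inverse (Λ + Bt.comp (adjoint Bt))).comp Λ))) ∧
    IsUnit (R + (adjoint Bt).comp ((Ring.inverse (1 - z • adjoint Z)).comp
      ((Ring.inverse Λ).comp (Bt.comp R)))) ∧
    Ring.inverse (R + (adjoint Bt).comp ((Ring.inverse (1 - z • adjoint Z)).comp
        ((Ring.inverse Λ).comp (Bt.comp R))))
      = R - z • ((R.comp (adjoint Bt)).comp
          ((Ring.inverse (1 - z • ((adjoint Z).comp
              ((Ring.inverse (Λ + Bt.comp (adjoint Bt))).comp Λ)))).comp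
            ((adjoint Z).comp ((Ring.inverse Λ).comp (Bt.comp (R.comp R)))))) ∧
    spectralRadius ℂ ((adjoint Z).comp
      ((Ring.inverse (Λ + Bt.comp (adjoint Bt))).comp Λ)) ≤ 1 := by
  classical
  obtain ⟨hΛpos, hΛu⟩ := hpos
  obtain ⟨hRpos, hR2⟩ := hR
  have hΛ0 : 0 ≤ Λ := (nonneg_iff_isPositive Λ).mpr hΛpos
  have hΛsa : IsSelfAdjoint Λ := hΛpos.isSelfAdjoint
  -- isometry facts for the shifts
  have hSYiso : ∀ x, ‖S𝒴 x‖ = ‖x‖ := aux_shift_norm S𝒴 hS𝒴0 hS𝒴1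
  have hSUiso : ∀ x, ‖S𝒰 x‖ = ‖x‖ := aux_shift_norm S𝒰 hS𝒰0 hS𝒰1
  -- basic positivity
  have hBtBt0 : 0 ≤ Bt.comp (adjoint Bt) := by
    rw [nonneg_iff_isPositive]
    have h := (isPositive_one (E := 𝒰) (𝕜 := ℂ)).conj_adjoint Bt
    simpa [one_def, id_comp] using h
  set M := Λ + Bt.comp (adjoint Bt) with hMdef
  have hΛleM : Λ ≤ M := le_add_of_nonneg_right hBtBt0
  have hMu : IsUnit M := CStarAlgebra.isUnit_of_le Λ hΛleM ⟨hΛ0, hΛu⟩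
  have hM0 : 0 ≤ M := hΛ0.trans hΛleM
  have hMsa : IsSelfAdjoint M := ((nonneg_iff_isPositive M).mp hM0).isSelfAdjoint
  set Q := Ring.inverse Λ with hQdef
  set Mi := Ring.inverse M with hMidef
  have hΛQ : Λ * Q = 1 := Ring.mul_inverse_cancel Λ hΛu
  have hQΛ : Q * Λ = 1 := Ring.inverse_mul_cancel Λ hΛu
  have hMMi : M * Mi = 1 := Ring.mul_inverse_cancel M hMu
  have hMiM : Mi * M = 1 := Ring.inverse_mul_cancel M hMu
  have hQsa : star Q = Q := hQdef ▸ aux_star_ringinverse hΛsa hΛu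
  have hQ0 : 0 ≤ Q := hQdef ▸ aux_ringinverse_nonneg hΛ0 hΛu
  have hMisa : star Mi = Mi := hMidef ▸ aux_star_ringinverse hMsa hMu
  -- coercivity of Λ
  obtain ⟨ε, hεpos, hcoer⟩ := aux_coercive hΛ0 hΛu
  -- intertwining of powers
  have hZnW : ∀ n : ℕ, (Z ^ n).comp W = W.comp (S𝒴 ^ n) := by
    intro n
    induction n with
    | zero => simp [pow_zero, one_def, id_comp, comp_id]
    | succ n ih =>
      rw [pow_succ' Z n, pow_succ' S𝒴 n]
      calc (Z * Z ^ n).comp W = Z.comp ((Z ^ n).comp W) := (comp_assoc _ _ _)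
        _ = Z.comp (W.comp (S𝒴 ^ n)) := by rw [ih]
        _ = (Z.comp W).comp (S𝒴 ^ n) := (comp_assoc _ _ _).symm
        _ = (W.comp S𝒴).comp (S𝒴 ^ n) := by rw [hW]
        _ = W.comp (S𝒴 * S𝒴 ^ n) := comp_assoc _ _ _
  have hZnWt : ∀ n : ℕ, (Z ^ n).comp Wt = Wt.comp (S𝒰 ^ n) := by
    intro n
    induction n with
    | zero => simp [pow_zero, one_def, id_comp, comp_id]
    | succ n ih =>
      rw [pow_succ' Z n, pow_succ' S𝒰 n]
      calc (Z * Z ^ n).comp Wt = Z.comp ((Z ^ n).comp Wt) := (comp_assoc _ _ _)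
        _ = Z.comp (Wt.comp (S𝒰 ^ n)) := by rw [ih]
        _ = (Z.comp Wt).comp (S𝒰 ^ n) := (comp_assoc _ _ _).symm
        _ = (Wt.comp S𝒰).comp (S𝒰 ^ n) := by rw [hWt]
        _ = Wt.comp (S𝒰 * S𝒰 ^ n) := comp_assoc _ _ _
  -- the sandwiched operators
  have hgn : ∀ n : ℕ, (Z ^ n).comp (Λ.comp (adjoint (Z ^ n)))
      = (W.comp (S𝒴 ^ n)).comp (adjoint (W.comp (S𝒴 ^ n)))
        - (Wt.comp (S𝒰 ^ n)).comp (adjoint (Wt.comp (S𝒰 ^ n))) := by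
    intro n
    conv_lhs => rw [hΛ]
    rw [← hZnW n, ← hZnWt n]
    simp only [adjoint_comp, comp_sub, sub_comp, comp_assoc]
  have hgb : ∀ n : ℕ, (Z ^ n).comp (Λ.comp (adjoint (Z ^ n))) ≤ W.comp (adjoint W) := by
    intro n
    rw [ContinuousLinearMap.le_def]
    have hkey : W.comp (adjoint W) - (Z ^ n).comp (Λ.comp (adjoint (Z ^ n)))
        = W.comp ((((1 : ℓ²(𝒴) →L[ℂ] ℓ²(𝒴))
              - (S𝒴 ^ n).comp (adjoint (S𝒴 ^ n)))).comp (adjoint W))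
          + (Wt.comp (S𝒰 ^ n)).comp (adjoint (Wt.comp (S𝒰 ^ n))) := by
      rw [hgn n]
      simp only [adjoint_comp, comp_sub, sub_comp, comp_assoc, one_def, id_comp]
      abel
    rw [hkey]
    apply IsPositive.add
    · exact (aux_one_sub_mul_star_pos _ (aux_pow_norm_le_one hSYiso n)).conj_adjoint W
    · have h := (isPositive_one (E := ℓ²(𝒰)) (𝕜 := ℂ)).conj_adjoint (Wt.comp (S𝒰 ^ n))
      simpa [one_def, id_comp] using h
  -- quadratic bound for adjoint Z and invertibility of 1 - z • adjoint Z
  have hadjpow : ∀ n : ℕ, adjoint (Z ^ n) = (adjoint Z) ^ n := by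
    intro n
    rw [← star_eq_adjoint, ← star_eq_adjoint, star_pow]
  have hstarpow : ∀ n : ℕ, star ((adjoint Z) ^ n) = Z ^ n := by
    intro n
    rw [← star_eq_adjoint, star_pow, star_star]
  have hq1 : ∀ (n : ℕ) (x : 𝒵),
      RCLike.re (inner ℂ (Λ (((adjoint Z) ^ n) x)) (((adjoint Z) ^ n) x) : ℂ)
        ≤ ‖adjoint W‖ ^ 2 * ‖x‖ ^ 2 := by
    intro n x
    have hop : star ((adjoint Z) ^ n) * Λ * ((adjoint Z) ^ n)
        = (Z ^ n).comp (Λ.comp (adjoint (Z ^ n))) := by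
      rw [hstarpow n, hadjpow n]
      exact (comp_assoc _ _ _)
    have h1 : (inner ℂ (Λ (((adjoint Z) ^ n) x)) (((adjoint Z) ^ n) x) : ℂ)
        = inner ℂ (((Z ^ n).comp (Λ.comp (adjoint (Z ^ n)))) x) x := by
      rw [← aux_conj_inner ((adjoint Z) ^ n) Λ x, hop]
    rw [h1]
    calc RCLike.re (inner ℂ (((Z ^ n).comp (Λ.comp (adjoint (Z ^ n)))) x) x : ℂ)
        ≤ RCLike.re (inner ℂ ((W.comp (adjoint W)) x) x : ℂ) := aux_quad_mono (hgb n) x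
      _ = ‖(adjoint W) x‖ ^ 2 := by
          rw [comp_apply, ← adjoint_inner_right, inner_self_eq_norm_sq]
      _ ≤ ‖adjoint W‖ ^ 2 * ‖x‖ ^ 2 := by
          rw [← mul_pow]
          exact pow_le_pow_left₀ (norm_nonneg _) (le_opNorm _ _) 2
  have hpow1 : ∀ n : ℕ, ‖(adjoint Z) ^ n‖ ≤ Real.sqrt (‖adjoint W‖ ^ 2 / ε) :=
    aux_pow_norm_le hεpos (sq_nonneg _) hcoer hq1
  have part1 : IsUnit (1 - z • adjoint Z) := aux_isUnit_one_sub _ _ hpow1 hz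
  -- Z Λ Z* ≤ M
  have hprojU : (1 : ℓ²(𝒰) →L[ℂ] ℓ²(𝒰)) - S𝒰.comp (adjoint S𝒰) = E𝒰.comp (adjoint E𝒰) :=
    aux_proj_identity S𝒰 E𝒰 hS𝒰0 hS𝒰1 hE𝒰0 hE𝒰1
  have hBtid : Wt.comp (((1 : ℓ²(𝒰) →L[ℂ] ℓ²(𝒰)) - S𝒰.comp (adjoint S𝒰)).comp (adjoint Wt))
      = Bt.comp (adjoint Bt) := by
    rw [hprojU, hBt]
    simp only [adjoint_comp, comp_assoc]
  have hg1 : Z.comp (Λ.comp (adjoint Z))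
      = (W.comp S𝒴).comp (adjoint (W.comp S𝒴))
        - (Wt.comp S𝒰).comp (adjoint (Wt.comp S𝒰)) := by
    conv_lhs => rw [hΛ]
    rw [← hW, ← hWt]
    simp only [adjoint_comp, comp_sub, sub_comp, comp_assoc]
  have hZΛZleM : Z.comp (Λ.comp (adjoint Z)) ≤ M := by
    rw [ContinuousLinearMap.le_def]
    have hkey : M - Z.comp (Λ.comp (adjoint Z))
        = W.comp ((((1 : ℓ²(𝒴) →L[ℂ] ℓ²(𝒴)) - S𝒴.comp (adjoint S𝒴))).comp (adjoint W)) := by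
      rw [hg1, hMdef, hΛ, ← hBtid]
      simp only [adjoint_comp, comp_sub, sub_comp, comp_assoc, one_def, id_comp]
      abel
    rw [hkey]
    exact (aux_one_sub_mul_star_pos _
      (opNorm_le_bound _ zero_le_one (fun x => by rw [hSYiso, one_mul]))).conj_adjoint W
  -- Mi ≤ Q and Λ Mi Λ ≤ Λ
  have hMiLeQ : Mi ≤ Q := by
    have e1 : Mi = ↑hMu.unit⁻¹ :=
      hMidef.trans ((congrArg Ring.inverse hMu.unit_spec).symm.trans (Ring.inverse_unit _))
    have e2 : Q = ↑hΛu.unit⁻¹ :=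
      hQdef.trans ((congrArg Ring.inverse hΛu.unit_spec).symm.trans (Ring.inverse_unit _))
    rw [e1, e2]
    exact CStarAlgebra.inv_le_inv (by rw [hΛu.unit_spec]; exact hΛ0)
      (by rw [hΛu.unit_spec, hMu.unit_spec]; exact hΛleM)
  have hΛMiΛ : Λ * Mi * Λ ≤ Λ := by
    have h := star_left_conjugate_le_conjugate hMiLeQ Λ
    rw [hΛsa.star_eq] at h
    calc Λ * Mi * Λ ≤ Λ * Q * Λ := h
      _ = Λ := by rw [hΛQ, one_mul]
  -- the operator T = Z* Mi Λ and its properties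
  set TT := (adjoint Z).comp (Mi.comp Λ) with hTTdef
  have hstarTT : star TT = (Λ * Mi) * Z := by
    have : star TT = star (Mi.comp Λ) * star (adjoint Z) := star_mul _ _
    rw [this]
    have h1 : star (Mi.comp Λ) = Λ * Mi := by
      have : star (Mi * Λ) = star Λ * star Mi := star_mul _ _
      rw [show star (Mi.comp Λ) = star (Mi * Λ) from rfl, this, hΛsa.star_eq, hMisa]
    have h2 : star (adjoint Z) = Z := by rw [← star_eq_adjoint, star_star]
    rw [h1, h2]
  have hTTconj : star TT * Λ * TT ≤ Λ := by
    have h := star_left_conjugate_le_conjugate hZΛZleM (Mi * Λ)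
    have hsc : star (Mi * Λ) = Λ * Mi := by
      rw [star_mul, hΛsa.star_eq, hMisa]
    rw [hsc] at h
    calc star TT * Λ * TT
        = (Λ * Mi) * (Z.comp (Λ.comp (adjoint Z))) * (Mi * Λ) := by
          rw [hstarTT, hTTdef]
          simp only [show ∀ (f g : 𝒵 →L[ℂ] 𝒵), f * g = f.comp g from fun _ _ => rfl,
            comp_assoc]
      _ ≤ (Λ * Mi) * M * (Mi * Λ) := h
      _ = Λ * Mi * Λ := by
          rw [mul_assoc (Λ * Mi) M (Mi * Λ), ← mul_assoc M Mi Λ, hMMi, one_mul]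
      _ ≤ Λ := hΛMiΛ
  have hq2 : ∀ (n : ℕ) (x : 𝒵),
      RCLike.re (inner ℂ (Λ ((TT ^ n) x)) ((TT ^ n) x) : ℂ) ≤ ‖Λ‖ * ‖x‖ ^ 2 := by
    intro n x
    calc RCLike.re (inner ℂ (Λ ((TT ^ n) x)) ((TT ^ n) x) : ℂ)
        ≤ RCLike.re (inner ℂ (Λ x) x : ℂ) := aux_quad_pow (aux_quad_of_conj_le hTTconj) n x
      _ ≤ ‖Λ x‖ * ‖x‖ := re_inner_le_norm _ _
      _ ≤ ‖Λ‖ * ‖x‖ ^ 2 := by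
          have := le_opNorm Λ x
          have hx : (0:ℝ) ≤ ‖x‖ := norm_nonneg _
          nlinarith
  have hpow2 : ∀ n : ℕ, ‖TT ^ n‖ ≤ Real.sqrt (‖Λ‖ / ε) :=
    aux_pow_norm_le hεpos (norm_nonneg _) hcoer hq2
  have part2 : IsUnit (1 - z • TT) := aux_isUnit_one_sub _ _ hpow2 hz
  have part5 : spectralRadius ℂ TT ≤ 1 := aux_specRad_le_one _ _ hpow2
  -- the operator X and its inverse
  set Bs := adjoint Bt with hBsdef
  set X := (1 : 𝒰 →L[ℂ] 𝒰) + Bs.comp (Q.comp Bt) with hXdef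
  have hX0 : 0 ≤ Bs.comp (Q.comp Bt) := by
    rw [nonneg_iff_isPositive]
    have h := ((nonneg_iff_isPositive Q).mp hQ0).adjoint_conj Bt
    simpa [hBsdef, comp_assoc] using h
  have hXu : IsUnit X := CStarAlgebra.isUnit_of_le 1
    (le_add_of_nonneg_right hX0) ⟨zero_le_one, isUnit_one⟩
  have hXXi : X * Ring.inverse X = 1 := Ring.mul_inverse_cancel X hXu
  have hXiX : Ring.inverse X * X = 1 := Ring.inverse_mul_cancel X hXu
  have hXRR : X * (R * R) = 1 := by
    rw [show R * R = R.comp R from rfl, hR2]; exact hXXi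
  have hRRX : (R * R) * X = 1 := by
    rw [show R * R = R.comp R from rfl, hR2]; exact hXiX
  -- R is invertible and commutes with X
  have hXR_RR : (X * R) * R = 1 := by rw [mul_assoc]; exact hXRR
  have hR_RX : R * (R * X) = 1 := by rw [← mul_assoc]; exact hRRX
  have hXR_comm : X * R = R * X := by
    calc X * R = (X * R) * (R * (R * X)) := by rw [hR_RX, mul_one]
      _ = ((X * R) * R) * (R * X) := by simp only [mul_assoc]
      _ = R * X := by rw [hXR_RR, one_mul]
  have hRu : IsUnit R := by
    refine isUnit_iff_exists.mpr ⟨R * X, hR_RX, ?_⟩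
    rw [← hXR_comm]
    exact hXR_RR
  -- resolvents
  set Δi := Ring.inverse (1 - z • adjoint Z) with hΔidef
  set Γi := Ring.inverse (1 - z • TT) with hΓidef
  have hΔΔi : (1 - z • adjoint Z) * Δi = 1 := Ring.mul_inverse_cancel _ part1
  have hΔiΔ : Δi * (1 - z • adjoint Z) = 1 := Ring.inverse_mul_cancel _ part1
  have hΓΓi : (1 - z • TT) * Γi = 1 := Ring.mul_inverse_cancel _ part2
  have hΓiΓ : Γi * (1 - z • TT) = 1 := Ring.inverse_mul_cancel _ part2
  have hΔi_exp : Δi = 1 + z • (Δi * adjoint Z) := by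
    have h := hΔiΔ
    rw [mul_sub, mul_one, mul_smul_comm] at h
    exact (sub_eq_iff_eq_add.mp h)
  -- the key identity Mi Bt = Q Bt (R R)
  have hMQB : M.comp (Q.comp Bt) = Bt.comp X := by
    rw [hMdef, hXdef, add_comp, comp_add,
      aux_cancel_left (show Λ.comp Q = 1 from hΛQ) Bt, comp_assoc]
    simp only [one_def, comp_id]
  -- Mi Bt k = Q Bt (R R) k
  have hMiBt0 : Mi.comp Bt = Q.comp (Bt.comp (R * R)) := by
    have h1 := congrArg (fun uu : 𝒰 →L[ℂ] 𝒵 => Mi.comp (uu.comp (R * R))) hMQB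
    simp only [comp_assoc] at h1
    rw [aux_cancel_left (show Mi.comp M = 1 from hMiM)] at h1
    rw [show X.comp (R * R) = 1 from hXRR] at h1
    simp only [one_def, comp_id] at h1
    exact h1.symm
  have hMiBtk : ∀ k : 𝒰 →L[ℂ] 𝒰,
      Mi.comp (Bt.comp k) = Q.comp (Bt.comp ((R * R).comp k)) := by
    intro k
    rw [← comp_assoc, hMiBt0]
    simp only [comp_assoc]
  -- resolvent identities
  have hMiΛ_id : Mi * Λ = 1 - Mi.comp (Bt.comp Bs) := by
    have h := hMiM
    rw [hMdef, mul_add] at h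
    exact eq_sub_of_add_eq h
  have hΓmΔ : (1 - z • TT) - (1 - z • adjoint Z)
      = z • ((adjoint Z).comp (Mi.comp (Bt.comp Bs))) := by
    have h1 : (1 - z • TT) - (1 - z • adjoint Z) = z • (adjoint Z - TT) := by
      rw [smul_sub]; abel
    rw [h1, hTTdef]
    congr 1
    rw [show (adjoint Z).comp (Mi.comp Λ) = adjoint Z * (Mi * Λ) from rfl, hMiΛ_id,
      mul_sub, mul_one, sub_sub_cancel]
    rfl
  have hresolv1 : Δi - Γi
      = z • (Δi.comp ((adjoint Z).comp (Mi.comp ((Bt.comp Bs).comp Γi)))) := by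
    have h2 : Δi * ((1 - z • TT) - (1 - z • adjoint Z)) * Γi = Δi - Γi := by
      rw [mul_sub, sub_mul, mul_assoc Δi (1 - z • TT) Γi, hΓΓi, mul_one, hΔiΔ, one_mul]
    rw [← h2, hΓmΔ]
    simp only [mul_smul_comm, smul_mul_assoc]
    congr 1
  have hresolv2 : Δi - Γi
      = z • (Γi.comp ((adjoint Z).comp (Mi.comp ((Bt.comp Bs).comp Δi)))) := by
    have h2 : Γi * ((1 - z • TT) - (1 - z • adjoint Z)) * Δi = Δi - Γi := by
      rw [mul_sub, sub_mul, mul_assoc Γi (1 - z • adjoint Z) Δi, hΔΔi, mul_one,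
        hΓiΓ, one_mul]
    rw [← h2, hΓmΔ]
    simp only [mul_smul_comm, smul_mul_assoc]
    congr 1
  -- the operators u, v, p, q
  set u := Bs.comp (Δi.comp ((adjoint Z).comp (Q.comp Bt))) with hudef
  set v := Bs.comp (Γi.comp ((adjoint Z).comp (Q.comp Bt))) with hvdef
  have hUV1 : u - v = z • (u.comp ((R * R).comp v)) := by
    have h1 : u - v = Bs.comp ((Δi - Γi).comp ((adjoint Z).comp (Q.comp Bt))) := by
      rw [hudef, hvdef]; simp only [sub_comp, comp_sub]
    rw [h1, hresolv1]
    simp only [smul_comp, comp_smul]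
    congr 1
    rw [hudef, hvdef]
    simp only [comp_assoc]
    rw [hMiBtk (Bs.comp (Γi.comp ((adjoint Z).comp (Q.comp Bt))))]
  have hUV2 : u - v = z • (v.comp ((R * R).comp u)) := by
    have h1 : u - v = Bs.comp ((Δi - Γi).comp ((adjoint Z).comp (Q.comp Bt))) := by
      rw [hudef, hvdef]; simp only [sub_comp, comp_sub]
    rw [h1, hresolv2]
    simp only [smul_comp, comp_smul]
    congr 1
    rw [hudef, hvdef]
    simp only [comp_assoc]
    rw [hMiBtk (Bs.comp (Δi.comp ((adjoint Z).comp (Q.comp Bt))))]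
  set p := u.comp (R * R) with hpdef
  set q := v.comp (R * R) with hqdef
  have hrel1 : p - q = z • (p * q) := by
    rw [hpdef, hqdef, ← sub_comp, hUV1]
    simp only [show ∀ f g : 𝒰 →L[ℂ] 𝒰, f * g = f.comp g from fun _ _ => rfl,
      smul_comp, comp_assoc]
  have hrel2 : p - q = z • (q * p) := by
    rw [hpdef, hqdef, ← sub_comp, hUV2]
    simp only [show ∀ f g : 𝒰 →L[ℂ] 𝒰, f * g = f.comp g from fun _ _ => rfl,
      smul_comp, comp_assoc]
  have hfact1 : (1 + z • p) * (1 - z • q) = 1 := aux_geom hrel1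
  have hfact2 : (1 - z • q) * (1 + z • p) = 1 := aux_geom' hrel2
  -- decomposition of Υ
  have hpX : p * X = u := by
    rw [hpdef]
    calc (u.comp (R * R)) * X = u.comp ((R * R).comp X) := comp_assoc _ _ _
      _ = u.comp 1 := by rw [show (R * R).comp X = 1 from hRRX]
      _ = u := by rw [one_def, comp_id]
  have hKdecomp : R + Bs.comp (Δi.comp (Q.comp (Bt.comp R))) = ((1 + z • p) * X) * R := by
    have hrhs : ((1 + z • p) * X) * R = X * R + z • (u * R) := by
      rw [add_mul, one_mul, smul_mul_assoc, hpX, add_mul, smul_mul_assoc]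
    rw [hrhs]
    conv_lhs => rw [hΔi_exp]
    rw [hudef, hXdef]
    simp only [show ∀ f g : 𝒰 →L[ℂ] 𝒰, f * g = f.comp g from fun _ _ => rfl,
      show ∀ f g : 𝒵 →L[ℂ] 𝒵, f * g = f.comp g from fun _ _ => rfl,
      add_comp, comp_add, smul_comp, comp_smul, comp_assoc, one_def, id_comp, comp_id]
    abel
  have hKu : IsUnit (1 + z • p) := isUnit_iff_exists.mpr ⟨1 - z • q, hfact1, hfact2⟩
  have part3 : IsUnit (R + Bs.comp (Δi.comp (Q.comp (Bt.comp R)))) := by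
    rw [hKdecomp]
    exact (hKu.mul hXu).mul hRu
  -- the inverse formula
  have hcand1 : (((1 + z • p) * X) * R) * (R * (1 - z • q)) = 1 := by
    calc (((1 + z • p) * X) * R) * (R * (1 - z • q))
        = (1 + z • p) * ((X * (R * R)) * (1 - z • q)) := by simp only [mul_assoc]
      _ = (1 + z • p) * (1 - z • q) := by rw [hXRR, one_mul]
      _ = 1 := hfact1
  have hcand2 : (R * (1 - z • q)) * (((1 + z • p) * X) * R) = 1 := by
    calc (R * (1 - z • q)) * (((1 + z • p) * X) * R)
        = R * (((1 - z • q) * (1 + z • p)) * (X * R)) := by simp only [mul_assoc]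
      _ = R * (X * R) := by rw [hfact2, one_mul]
      _ = R * (R * X) := by rw [hXR_comm]
      _ = 1 := hR_RX
  have hinv : Ring.inverse (R + Bs.comp (Δi.comp (Q.comp (Bt.comp R)))) = R * (1 - z • q) := by
    rw [hKdecomp]
    exact aux_ring_inverse_eq hcand1 hcand2
  have hfinal : R * (1 - z • q)
      = R - z • ((R.comp Bs).comp (Γi.comp ((adjoint Z).comp
          (Q.comp (Bt.comp (R.comp R)))))) := by
    rw [mul_sub, mul_one, mul_smul_comm, hqdef, hvdef]
    congr 2
  exact ⟨part1, part2, part3, hinv.trans hfinal, part5⟩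

end
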